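/- Let f: K → ℝ be a discrete Morse function on a finite simplicial complex K. Then there exists an injective discrete Morse function g: K → ℝ that is equivalent to f (i.e., for every codimension-one pair σ < τ, f(σ) < f(τ) iff g(σ) < g(τ)) and has exactly the same critical simplices as f. -/

import Mathlib

open Finset

noncomputable section

attribute [local instance] Classical.propDecidable

/-- A finite abstract simplicial complex on vertex type `V`. -/
structure SComplex (V : Type*) [LinearOrder V] where
  cells : Finset (Finset V)
  nonempty_of_mem : ∀ σ ∈ cells, σ.Nonempty
  down_closed : ∀ σ ∈ cells, ∀ τ ⊆ σ, τ.Nonempty → τ ∈ cells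

variable {V : Type*} [LinearOrder V]

/-- `U(σ)`: immediate cofaces of `σ` in `K` with not-larger `f`-value. -/
def Uset (f : Finset V → ℝ) (K : SComplex V) (σ : Finset V) : Finset (Finset V) :=
  K.cells.filter fun τ => σ ⊂ τ ∧ τ.card = σ.card + 1 ∧ f τ ≤ f σ

/-- `L(σ)`: immediate faces of `σ` in `K` with not-smaller `f`-value. -/
def Lset (f : Finset V → ℝ) (K : SComplex V) (σ : Finset V) : Finset (Finset V) :=
  K.cells.filter fun γ => γ ⊂ σ ∧ σ.card = γ.card + 1 ∧ f σ ≤ f γ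

/-- `f` is a discrete Morse function on `K`. -/
def IsDMF (f : Finset V → ℝ) (K : SComplex V) : Prop :=
  ∀ σ ∈ K.cells, (Uset f K σ).card ≤ 1 ∧ (Lset f K σ).card ≤ 1

/-- A critical cell of `f`. -/
def IsCriticalCell (f : Finset V → ℝ) (K : SComplex V) (σ : Finset V) : Prop :=
  σ ∈ K.cells ∧ Uset f K σ = ∅ ∧ Lset f K σ = ∅

def IsCriticalValue (f : Finset V → ℝ) (K : SComplex V) (c : ℝ) : Prop :=
  ∃ σ, IsCriticalCell f K σ ∧ f σ = c

def IsRegularValue (f : Finset V → ℝ) (K : SComplex V) (a : ℝ) : Prop :=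
  ¬ IsCriticalValue f K a

/-- `{σ < τ}` is a pair of the gradient vector field `V = -∇f`. -/
def GradPair (f : Finset V → ℝ) (K : SComplex V) (σ τ : Finset V) : Prop :=
  σ ∈ K.cells ∧ τ ∈ K.cells ∧ σ ⊂ τ ∧ τ.card = σ.card + 1 ∧ f τ ≤ f σ

/-- The sublevel (level sub-)complex `K^a`: all cells with `f`-value ≤ a and their faces. -/
def subcx (f : Finset V → ℝ) (K : SComplex V) (a : ℝ) : Finset (Finset V) :=
  K.cells.filter fun σ => ∃ τ ∈ K.cells, σ ⊆ τ ∧ f τ ≤ a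

/-- The sublevel set `L^a = {σ ∈ K : f σ ≤ a}` (no closure). -/
def sublevelSet (f : Finset V → ℝ) (K : SComplex V) (a : ℝ) : Finset (Finset V) :=
  K.cells.filter fun σ => f σ ≤ a

/-- One elementary collapse: remove a free pair `σ < τ`. -/
def ElemCollapse (C D : Finset (Finset V)) : Prop :=
  ∃ σ τ : Finset V, σ ∈ C ∧ τ ∈ C ∧ σ ⊂ τ ∧ τ.card = σ.card + 1 ∧
    (∀ ρ ∈ C, σ ⊂ ρ → ρ = τ) ∧ D = (C.erase σ).erase τ

/-- `C` collapses onto `D`. -/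
def Collapses (C D : Finset (Finset V)) : Prop :=
  Relation.ReflTransGen ElemCollapse C D

/-- `L` is a subcomplex of `K`. -/
def IsSubcomplexOf (L : Finset (Finset V)) (K : SComplex V) : Prop :=
  L ⊆ K.cells ∧ ∀ σ ∈ L, ∀ τ ⊆ σ, τ.Nonempty → τ ∈ L

/-- A complex (given as its finset of cells) is collapsible: it collapses to a vertex. -/
def CollapsibleCx (L : Finset (Finset V)) : Prop :=
  ∃ v : V, Collapses L {({v} : Finset V)}

/-- Boundary of an oriented simplex (vertices ordered by the linear order on `V`). -/
noncomputable def bdryCell (σ : Finset V) : Finset V →₀ ℤ :=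
  ∑ v ∈ σ, Finsupp.single (σ.erase v) ((-1 : ℤ) ^ ((σ.filter fun w => w < v).card))

/-- Boundary operator on chains. -/
noncomputable def bdry (c : Finset V →₀ ℤ) : Finset V →₀ ℤ :=
  c.sum fun σ n => n • bdryCell σ

/-- The gradient `V` as a chain map: `V(σ) = -⟨∂τ, σ⟩ τ` when `{σ < τ} ∈ V`, else 0. -/
noncomputable def gradOp (f : Finset V → ℝ) (K : SComplex V) (c : Finset V →₀ ℤ) :
    Finset V →₀ ℤ :=
  c.sum fun σ n => ∑ τ ∈ Uset f K σ, Finsupp.single τ (-(n * bdryCell τ σ))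

/-- The discrete flow operator `φ = Id + ∂V + V∂`. -/
noncomputable def flow (f : Finset V → ℝ) (K : SComplex V) (c : Finset V →₀ ℤ) :
    Finset V →₀ ℤ :=
  c + bdry (gradOp f K c) + gradOp f K (bdry c)

noncomputable def flowCell (f : Finset V → ℝ) (K : SComplex V) (σ : Finset V) :
    Finset V →₀ ℤ :=
  flow f K (Finsupp.single σ 1)

/-- `Φ(A)`: union of the supports of `φ(σ)` over `σ ∈ A`. -/
noncomputable def Phi (f : Finset V → ℝ) (K : SComplex V) (A : Finset (Finset V)) :
    Finset (Finset V) :=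
  A.biUnion fun σ => (flowCell f K σ).support

/-- `Φ̄(A)`: the subcomplex generated by `Φ(A)`. -/
noncomputable def PhiBar (f : Finset V → ℝ) (K : SComplex V) (A : Finset (Finset V)) :
    Finset (Finset V) :=
  (Phi f K A).biUnion fun σ => σ.powerset.filter fun τ => τ.Nonempty

/-- Min-max data `(𝓗, 𝓢)` for `f` on `K`. -/
def IsMinMaxData (f : Finset V → ℝ) (K : SComplex V)
    (H : Set (Finset (Finset V) → Finset (Finset V)))
    (S : Set (Finset (Finset V))) : Prop :=
  (∀ a : ℝ, IsRegularValue f K a →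
    ∃ ε > (0 : ℝ), ∃ h ∈ H, h (sublevelSet f K (a + ε)) ⊆ sublevelSet f K (a - ε)) ∧
  ∀ h ∈ H, ∀ s ∈ S, h s ∈ S

/-- `x` is the maximum value of `f` on the finite set `s`. -/
def IsMaxValOn (f : Finset V → ℝ) (s : Finset (Finset V)) (x : ℝ) : Prop :=
  (∃ σ ∈ s, f σ = x) ∧ ∀ σ ∈ s, f σ ≤ x

/-- Geometric precategory: `L` is covered by `m+1` subcomplexes collapsible in `K`. -/
def precatLE (K : SComplex V) (L : Finset (Finset V)) (m : ℕ) : Prop :=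
  ∃ U : Fin (m + 1) → Finset (Finset V),
    (∀ i, IsSubcomplexOf (U i) K ∧ CollapsibleCx (U i)) ∧ ∀ σ ∈ L, ∃ i, σ ∈ U i

/-- Discrete geometric category of `L` in `K`. -/
noncomputable def dgcat (K : SComplex V) (L : Finset (Finset V)) : ℕ :=
  sInf {m | ∃ L', Collapses L L' ∧ precatLE K L' m}

/-- `σ` lies in the basin `A(v₀)`: some subcomplex of `K` containing `σ` collapses to `v₀`. -/
def InBasin (K : SComplex V) (v₀ : V) (σ : Finset V) : Prop :=
  ∃ L : Finset (Finset V), IsSubcomplexOf L K ∧ Collapses L {({v₀} : Finset V)} ∧ σ ∈ L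

/-- Edge-path connectivity of a complex given by its finset of cells. -/
def ConnectedIn (C : Finset (Finset V)) : Prop :=
  ∀ u v : V, ({u} : Finset V) ∈ C → ({v} : Finset V) ∈ C →
    ∃ (n : ℕ) (p : ℕ → V), p 0 = u ∧ p n = v ∧ ∀ i < n, ({p i, p (i + 1)} : Finset V) ∈ C

/-- Admissible edge path from critical vertex `v₁` ending in the basin of `v₀`. -/
def IsAdmissiblePath (f : Finset V → ℝ) (K : SComplex V) (v₀ v₁ : V)
    (E : Finset (Finset V)) : Prop :=
  ∃ (r : ℕ) (u : ℕ → V), 1 ≤ r ∧ u 0 = v₁ ∧ InBasin K v₀ ({u r} : Finset V) ∧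
    (∀ i < r, u i ≠ u (i + 1) ∧ ({u i, u (i + 1)} : Finset V) ∈ K.cells) ∧
    (∀ i ≤ r, IsCriticalCell f K ({u i} : Finset V) → u i = v₀ ∨ u i = v₁) ∧
    (∀ j, 1 ≤ j → j ≤ r → InBasin K v₀ ({u j} : Finset V) →
      ∀ i, j ≤ i → i < r →
        f ({u i, u (i + 1)} : Finset V) < f ({u (i - 1), u i} : Finset V)) ∧
    E = insert ({v₁} : Finset V)
      ((Finset.range r).image fun i => ({u i, u (i + 1)} : Finset V))

/-- The family `Γ_k` of the discrete Lusternik–Schnirelmann argument. -/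
def GammaFam (f : Finset V → ℝ) (K : SComplex V) (k : ℕ) : Set (Finset (Finset V)) :=
  {L | ∃ a : ℝ, Collapses (subcx f K a) L ∧ k - 1 ≤ dgcat K (subcx f K a)}


def myLt (f : Finset V → ℝ) (σ τ : Finset V) : Prop :=
  f σ < f τ ∨ (f σ = f τ ∧ (τ.card < σ.card ∨
    (τ.card = σ.card ∧ toColex σ < toColex τ)))

lemma myLt_irrefl (f : Finset V → ℝ) (σ : Finset V) : ¬ myLt f σ σ := by
  simp [myLt]

lemma myLt_trans {f : Finset V → ℝ} {σ τ ρ : Finset V}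
    (h1 : myLt f σ τ) (h2 : myLt f τ ρ) : myLt f σ ρ := by
  rcases h1 with h1 | ⟨e1, h1⟩ <;> rcases h2 with h2 | ⟨e2, h2⟩
  · exact Or.inl (h1.trans h2)
  · exact Or.inl (e2 ▸ h1)
  · exact Or.inl (e1 ▸ h2)
  · refine Or.inr ⟨e1.trans e2, ?_⟩
    rcases h1 with h1 | ⟨c1, h1⟩ <;> rcases h2 with h2 | ⟨c2, h2⟩
    · exact Or.inl (h2.trans h1)
    · exact Or.inl (c2 ▸ h1)
    · exact Or.inl (c1 ▸ h2)
    · exact Or.inr ⟨c1 ▸ c2, h1.trans h2⟩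

lemma myLt_trichot (f : Finset V → ℝ) {σ τ : Finset V} (h : σ ≠ τ) :
    myLt f σ τ ∨ myLt f τ σ := by
  rcases lt_trichotomy (f σ) (f τ) with hf | hf | hf
  · exact Or.inl (Or.inl hf)
  · rcases lt_trichotomy σ.card τ.card with hc | hc | hc
    · exact Or.inr (Or.inr ⟨hf.symm, Or.inl hc⟩)
    · rcases lt_trichotomy (toColex σ) (toColex τ) with hx | hx | hx
      · exact Or.inl (Or.inr ⟨hf, Or.inr ⟨hc.symm, hx⟩⟩)
      · exact absurd (toColex_inj.1 hx) h
      · exact Or.inr (Or.inr ⟨hf.symm, Or.inr ⟨hc, hx⟩⟩)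
    · exact Or.inl (Or.inr ⟨hf, Or.inl hc⟩)
  · exact Or.inr (Or.inl hf)

lemma myLt_of_codim {f : Finset V → ℝ} {σ τ : Finset V} (hc : τ.card = σ.card + 1) :
    myLt f σ τ ↔ f σ < f τ := by
  constructor
  · rintro (h | ⟨_, h | ⟨h, _⟩⟩)
    · exact h
    · omega
    · omega
  · exact Or.inl

/-- the rank function -/
noncomputable def rk (f : Finset V → ℝ) (K : SComplex V) (σ : Finset V) : ℝ :=
  ((K.cells.filter fun ρ => myLt f ρ σ).card : ℝ)

lemma rk_mono {f : Finset V → ℝ} {K : SComplex V} {σ τ : Finset V}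
    (hσ : σ ∈ K.cells) (h : myLt f σ τ) : rk f K σ < rk f K τ := by
  have hsub : (K.cells.filter fun ρ => myLt f ρ σ) ⊂ (K.cells.filter fun ρ => myLt f ρ τ) := by
    refine Finset.ssubset_iff_of_subset ?_ |>.2 ?_
    · intro ρ hρ
      rw [Finset.mem_filter] at hρ ⊢
      exact ⟨hρ.1, myLt_trans hρ.2 h⟩
    · exact ⟨σ, Finset.mem_filter.2 ⟨hσ, h⟩, by simp [Finset.mem_filter, myLt_irrefl]⟩
  unfold rk
  exact_mod_cast Finset.card_lt_card hsub

lemma rk_lt_iff {f : Finset V → ℝ} {K : SComplex V} {σ τ : Finset V}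
    (hσ : σ ∈ K.cells) (hτ : τ ∈ K.cells) : rk f K σ < rk f K τ ↔ myLt f σ τ := by
  constructor
  · intro h
    by_contra hn
    rcases eq_or_ne σ τ with rfl | hne
    · exact lt_irrefl _ h
    · rcases myLt_trichot f hne with h' | h'
      · exact hn h'
      · exact absurd (rk_mono hτ h') (by linarith)
  · exact rk_mono hσ

lemma rk_codim_iff {f : Finset V → ℝ} {K : SComplex V} {σ τ : Finset V}
    (hσ : σ ∈ K.cells) (hτ : τ ∈ K.cells) (hc : τ.card = σ.card + 1) :
    f σ < f τ ↔ rk f K σ < rk f K τ := by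
  rw [rk_lt_iff hσ hτ, myLt_of_codim hc]

lemma Uset_rk_eq {f : Finset V → ℝ} {K : SComplex V} {σ : Finset V} (hσ : σ ∈ K.cells) :
    Uset (rk f K) K σ = Uset f K σ := by
  ext τ
  simp only [Uset, Finset.mem_filter, and_congr_right_iff]
  intro hτ hsub hc
  rw [← not_lt, ← not_lt, not_iff_not]
  exact (rk_codim_iff hσ hτ hc).symm

lemma Lset_rk_eq {f : Finset V → ℝ} {K : SComplex V} {σ : Finset V} (hσ : σ ∈ K.cells) :
    Lset (rk f K) K σ = Lset f K σ := by
  ext γ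
  simp only [Lset, Finset.mem_filter, and_congr_right_iff]
  intro hγ hsub hc
  rw [← not_lt, ← not_lt, not_iff_not]
  exact (rk_codim_iff hγ hσ hc).symm

theorem stmt1 (f : Finset V → ℝ) (K : SComplex V) (hf : IsDMF f K) :
    ∃ g : Finset V → ℝ, IsDMF g K ∧ Set.InjOn g (K.cells : Set (Finset V)) ∧
      (∀ σ ∈ K.cells, ∀ τ ∈ K.cells, σ ⊂ τ → τ.card = σ.card + 1 →
        (f σ < f τ ↔ g σ < g τ)) ∧
      (∀ σ : Finset V, IsCriticalCell f K σ ↔ IsCriticalCell g K σ) := by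
  refine ⟨rk f K, ?_, ?_, ?_, ?_⟩
  · intro σ hσ
    rw [Uset_rk_eq hσ, Lset_rk_eq hσ]
    exact hf σ hσ
  · intro σ hσ τ hτ hg
    by_contra hne
    rcases myLt_trichot f hne with h | h
    · exact absurd (rk_mono hσ h) (by rw [hg]; exact lt_irrefl _)
    · exact absurd (rk_mono hτ h) (by rw [hg]; exact lt_irrefl _)
  · intro σ hσ τ hτ _ hc
    exact rk_codim_iff hσ hτ hc
  · intro σ
    constructor
    · rintro ⟨hσ, hU, hL⟩
      exact ⟨hσ, by rw [Uset_rk_eq hσ]; exact hU, by rw [Lset_rk_eq hσ]; exact hL⟩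
    · rintro ⟨hσ, hU, hL⟩
      exact ⟨hσ, by rw [← Uset_rk_eq hσ]; exact hU, by rw [← Lset_rk_eq hσ]; exact hL⟩
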